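/- Fix x ∈ ℝ and K > 0 with K ≠ e^x, and set a = ln K − x ≠ 0. With C_BS(s) = e^x Φ((x − ln K)/s + s/2) − K Φ((x − ln K)/s − s/2) (Black–Scholes price with unit maturity and volatility s, zero rates), one has lim_{s→0⁺} [C_BS(s) − (e^x − K)^+] / [ (K s³ / (√(2π) a²)) · exp(−a²/(2s²) − a/2) ] = 1. -/

import Mathlib

open MeasureTheory

/-- The standard normal CDF. -/
noncomputable def Phi (y : ℝ) : ℝ :=
  (Real.sqrt (2 * Real.pi))⁻¹ * ∫ u in Set.Iic y, Real.exp (-u ^ 2 / 2)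

/-- Black–Scholes call price with zero rates, unit maturity and volatility `s`. -/
noncomputable def CBS1 (x K s : ℝ) : ℝ :=
  Real.exp x * Phi ((x - Real.log K) / s + s / 2)
    - K * Phi ((x - Real.log K) / s - s / 2)


open Real Filter Set

lemma gauss_eq : (fun u : ℝ => Real.exp (-u ^ 2 / 2)) = fun u : ℝ => Real.exp (-(1/2 : ℝ) * u ^ 2) := by
  funext u; congr 1; ring

lemma gauss_integrable : Integrable (fun u : ℝ => Real.exp (-u ^ 2 / 2)) := by
  rw [gauss_eq]; exact integrable_exp_neg_mul_sq (by norm_num)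

lemma gauss_integral : ∫ u : ℝ, Real.exp (-u ^ 2 / 2) = Real.sqrt (2 * Real.pi) := by
  rw [gauss_eq, integral_gaussian]; congr 1; ring

lemma sqrt2pi_pos : 0 < Real.sqrt (2 * Real.pi) := Real.sqrt_pos.2 (by positivity)

lemma Phi_eq (y : ℝ) : Phi y = (Real.sqrt (2*Real.pi))⁻¹ *
    ((∫ u in Set.Iic (0:ℝ), Real.exp (-u^2/2)) + ∫ u in (0:ℝ)..y, Real.exp (-u^2/2)) := by
  unfold Phi
  rw [← intervalIntegral.integral_Iic_sub_Iic gauss_integrable.integrableOn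
    gauss_integrable.integrableOn]
  ring

lemma hasDerivAt_Phi (y : ℝ) :
    HasDerivAt Phi ((Real.sqrt (2*Real.pi))⁻¹ * Real.exp (-y^2/2)) y := by
  have hc : Continuous fun u : ℝ => Real.exp (-u^2/2) := by continuity
  have h := ((hc.integral_hasStrictDerivAt 0 y).hasDerivAt.const_add
    (∫ u in Set.Iic (0:ℝ), Real.exp (-u^2/2))).const_mul ((Real.sqrt (2*Real.pi))⁻¹)
  have he : Phi = fun y => (Real.sqrt (2*Real.pi))⁻¹ *
      ((∫ u in Set.Iic (0:ℝ), Real.exp (-u^2/2)) + ∫ u in (0:ℝ)..y, Real.exp (-u^2/2)) :=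
    funext Phi_eq
  rw [he]; exact h

lemma tendsto_Phi_atTop : Tendsto Phi atTop (nhds 1) := by
  have h : Tendsto (fun y : ℝ => ∫ u in (0:ℝ)..y, Real.exp (-u^2/2)) atTop
      (nhds (∫ u in Set.Ioi (0:ℝ), Real.exp (-u^2/2))) :=
    intervalIntegral_tendsto_integral_Ioi 0 gauss_integrable.integrableOn tendsto_id
  have h2 := ((tendsto_const_nhds (x := (∫ u in Set.Iic (0:ℝ), Real.exp (-u^2/2)))
      (f := atTop)).add h).const_mul ((Real.sqrt (2*Real.pi))⁻¹)
  have he : Phi = fun y => (Real.sqrt (2*Real.pi))⁻¹ *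
      ((∫ u in Set.Iic (0:ℝ), Real.exp (-u^2/2)) + ∫ u in (0:ℝ)..y, Real.exp (-u^2/2)) :=
    funext Phi_eq
  rw [he]
  convert h2 using 2
  rw [intervalIntegral.integral_Iic_add_Ioi gauss_integrable.integrableOn gauss_integrable.integrableOn,
    gauss_integral, inv_mul_cancel₀ sqrt2pi_pos.ne']

lemma tendsto_Phi_atBot : Tendsto Phi atBot (nhds 0) := by
  have h : Tendsto (fun y : ℝ => ∫ u in y..(0:ℝ), Real.exp (-u^2/2)) atBot
      (nhds (∫ u in Set.Iic (0:ℝ), Real.exp (-u^2/2))) :=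
    intervalIntegral_tendsto_integral_Iic 0 gauss_integrable.integrableOn tendsto_id
  have h2 := ((tendsto_const_nhds (x := (∫ u in Set.Iic (0:ℝ), Real.exp (-u^2/2)))
      (f := atBot)).sub h).const_mul ((Real.sqrt (2*Real.pi))⁻¹)
  have he : Phi = fun y => (Real.sqrt (2*Real.pi))⁻¹ *
      ((∫ u in Set.Iic (0:ℝ), Real.exp (-u^2/2)) - ∫ u in y..(0:ℝ), Real.exp (-u^2/2)) := by
    funext y
    unfold Phi
    rw [← intervalIntegral.integral_Iic_sub_Iic gauss_integrable.integrableOn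
      gauss_integrable.integrableOn]
    ring
  rw [he]
  convert h2 using 2
  simp

/-- Leading term of the small-volatility expansion of the not-at-the-money
Black–Scholes price: with `a = ln K − x ≠ 0`,
`C_BS(s) − (e^x − K)⁺ ∼ (K s³/(√(2π)a²)) exp(−a²/(2s²) − a/2)` as `s → 0⁺`. -/
theorem stmt17 (x K : ℝ) (hK : 0 < K) (hKx : K ≠ Real.exp x) :
    Filter.Tendsto
      (fun s =>
        (CBS1 x K s - max (Real.exp x - K) 0) /
          (K * s ^ 3 / (Real.sqrt (2 * Real.pi) * (Real.log K - x) ^ 2)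
            * Real.exp (-(Real.log K - x) ^ 2 / (2 * s ^ 2) - (Real.log K - x) / 2)))
      (nhdsWithin 0 (Set.Ioi 0)) (nhds 1) := by
  set a := Real.log K - x with ha_def
  have ha : a ≠ 0 := sub_ne_zero.2 fun h => hKx (by rw [← h, Real.exp_log hK])
  have ha2 : (0:ℝ) < a ^ 2 := lt_of_le_of_ne (sq_nonneg a) (Ne.symm (pow_ne_zero 2 ha))
  have hs2 : Real.sqrt (2 * Real.pi) ≠ 0 := sqrt2pi_pos.ne'
  set c : ℝ := (Real.sqrt (2 * Real.pi))⁻¹ with hc_def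
  -- the candidate derivatives
  set f' : ℝ → ℝ := fun s => K * (c * Real.exp (-((x - Real.log K)/s - s/2)^2/2)) with hf'_def
  set g' : ℝ → ℝ := fun s =>
    K / (Real.sqrt (2 * Real.pi) * a ^ 2) * Real.exp (-a^2/(2*s^2) - a/2) * (3*s^2 + a^2)
    with hg'_def
  have key : ∀ s : ℝ, s ≠ 0 →
      Real.exp x * Real.exp (-((x - Real.log K)/s + s/2)^2/2)
        = K * Real.exp (-((x - Real.log K)/s - s/2)^2/2) := by
    intro s hs
    have h : x + (-((x - Real.log K)/s + s/2)^2/2)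
        = Real.log K + (-((x - Real.log K)/s - s/2)^2/2) := by
      field_simp
      ring
    calc Real.exp x * Real.exp (-((x - Real.log K)/s + s/2)^2/2)
        = Real.exp (x + (-((x - Real.log K)/s + s/2)^2/2)) := (Real.exp_add _ _).symm
      _ = Real.exp (Real.log K + (-((x - Real.log K)/s - s/2)^2/2)) := by rw [h]
      _ = Real.exp (Real.log K) * Real.exp (-((x - Real.log K)/s - s/2)^2/2) := Real.exp_add _ _
      _ = K * Real.exp (-((x - Real.log K)/s - s/2)^2/2) := by rw [Real.exp_log hK]
  have hff' : ∀ s ∈ Set.Ioo (0:ℝ) 1,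
      HasDerivAt (fun s => CBS1 x K s - max (Real.exp x - K) 0) (f' s) s := by
    intro s hs
    have hs0 : s ≠ 0 := hs.1.ne'
    have h1 : HasDerivAt (fun t : ℝ => (x - Real.log K)/t) ((x - Real.log K) * (-(s^2)⁻¹)) s := by
      simpa [div_eq_mul_inv] using (hasDerivAt_inv hs0).const_mul (x - Real.log K)
    have hdp : HasDerivAt (fun t : ℝ => (x - Real.log K)/t + t/2)
        ((x - Real.log K) * (-(s^2)⁻¹) + 1/2) s := h1.add ((hasDerivAt_id s).div_const 2)
    have hdm : HasDerivAt (fun t : ℝ => (x - Real.log K)/t - t/2)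
        ((x - Real.log K) * (-(s^2)⁻¹) - 1/2) s := h1.sub ((hasDerivAt_id s).div_const 2)
    have hP : HasDerivAt (fun t : ℝ => CBS1 x K t)
        (Real.exp x * (c * Real.exp (-((x - Real.log K)/s + s/2)^2/2)
            * ((x - Real.log K) * (-(s^2)⁻¹) + 1/2))
          - K * (c * Real.exp (-((x - Real.log K)/s - s/2)^2/2)
            * ((x - Real.log K) * (-(s^2)⁻¹) - 1/2))) s := by
      unfold CBS1
      exact (((hasDerivAt_Phi _).comp s hdp).const_mul (Real.exp x)).sub
        (((hasDerivAt_Phi _).comp s hdm).const_mul K)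
    have heq : Real.exp x * (c * Real.exp (-((x - Real.log K)/s + s/2)^2/2)
            * ((x - Real.log K) * (-(s^2)⁻¹) + 1/2))
          - K * (c * Real.exp (-((x - Real.log K)/s - s/2)^2/2)
            * ((x - Real.log K) * (-(s^2)⁻¹) - 1/2)) = f' s := by
      rw [hf'_def]
      linear_combination (c * ((x - Real.log K) * (-(s^2)⁻¹) + 1/2)) * key s hs0
    rw [← heq]
    exact hP.sub_const _
  have hgg' : ∀ s ∈ Set.Ioo (0:ℝ) 1,
      HasDerivAt (fun s => K * s ^ 3 / (Real.sqrt (2 * Real.pi) * a ^ 2)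
          * Real.exp (-a ^ 2 / (2 * s ^ 2) - a / 2)) (g' s) s := by
    intro s hs
    have hs0 : s ≠ 0 := hs.1.ne'
    have h2s2 : 2 * s ^ 2 ≠ 0 := by positivity
    have hpoly : HasDerivAt (fun t : ℝ => K * t ^ 3 / (Real.sqrt (2 * Real.pi) * a ^ 2))
        (K * (3 * s ^ 2) / (Real.sqrt (2 * Real.pi) * a ^ 2)) s := by
      simpa using ((hasDerivAt_pow 3 s).const_mul K).div_const (Real.sqrt (2 * Real.pi) * a ^ 2)
    have hinner : HasDerivAt (fun t : ℝ => -a ^ 2 / (2 * t ^ 2) - a / 2)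
        (-a ^ 2 * (-(2 * (2 * s)) / (2 * s ^ 2) ^ 2)) s := by
      have h1 : HasDerivAt (fun t : ℝ => 2 * t ^ 2) (2 * (2 * s)) s := by
        simpa using (hasDerivAt_pow 2 s).const_mul 2
      have h2 := (h1.inv h2s2).const_mul (-a ^ 2)
      simpa [div_eq_mul_inv] using h2.sub_const (a / 2)
    have hexp := hinner.exp
    have := hpoly.mul hexp
    refine this.congr_deriv ?_
    rw [hg'_def]
    field_simp
  have hg'ne : ∀ s ∈ Set.Ioo (0:ℝ) 1, g' s ≠ 0 := by
    intro s hs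
    have : (0:ℝ) < g' s := by
      rw [hg'_def]
      have : (0:ℝ) < 3 * s ^ 2 + a ^ 2 := by positivity
      positivity
    exact this.ne'
  -- limits of numerator and denominator
  have hIoi : Tendsto (fun s : ℝ => s⁻¹) (nhdsWithin 0 (Set.Ioi 0)) atTop :=
    tendsto_inv_nhdsGT_zero
  have hhalf : Tendsto (fun s : ℝ => s / 2) (nhdsWithin 0 (Set.Ioi 0)) (nhds 0) := by
    have := (Filter.tendsto_id.mono_right (nhdsWithin_le_nhds
      (a := (0:ℝ)) (s := Set.Ioi 0))).div_const 2
    simpa using this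
  have hf0 : Tendsto (fun s => CBS1 x K s - max (Real.exp x - K) 0)
      (nhdsWithin 0 (Set.Ioi 0)) (nhds 0) := by
    rcases ha.lt_or_gt with hlt | hgt
    · -- a < 0 : log K < x, exp x > K
      have hxL : Real.log K < x := by linarith [sub_neg.mp hlt]
      have hKex : K < Real.exp x := by
        calc K = Real.exp (Real.log K) := (Real.exp_log hK).symm
          _ < Real.exp x := Real.exp_lt_exp.2 hxL
      have hmax : max (Real.exp x - K) 0 = Real.exp x - K :=
        max_eq_left (by linarith)
      have hconst : Tendsto (fun s : ℝ => (x - Real.log K) * s⁻¹)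
          (nhdsWithin 0 (Set.Ioi 0)) atTop :=
        hIoi.const_mul_atTop (by linarith)
      have hdp : Tendsto (fun s : ℝ => (x - Real.log K)/s + s/2)
          (nhdsWithin 0 (Set.Ioi 0)) atTop := by
        have := hconst.atTop_add hhalf
        refine this.congr fun s => by simp [div_eq_mul_inv]
      have hdm : Tendsto (fun s : ℝ => (x - Real.log K)/s - s/2)
          (nhdsWithin 0 (Set.Ioi 0)) atTop := by
        have := hconst.atTop_add hhalf.neg
        refine this.congr fun s => by simp [div_eq_mul_inv]; ring
      have hC : Tendsto (fun s => CBS1 x K s) (nhdsWithin 0 (Set.Ioi 0))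
          (nhds (Real.exp x * 1 - K * 1)) := by
        unfold CBS1
        exact ((tendsto_Phi_atTop.comp hdp).const_mul (Real.exp x)).sub
          ((tendsto_Phi_atTop.comp hdm).const_mul K)
      rw [hmax]
      have := hC.sub_const (Real.exp x - K)
      simpa using this
    · -- a > 0 : x < log K, exp x < K
      have hxL : x < Real.log K := by linarith [sub_pos.mp hgt]
      have hKex : Real.exp x < K := by
        calc Real.exp x < Real.exp (Real.log K) := Real.exp_lt_exp.2 hxL
          _ = K := Real.exp_log hK
      have hmax : max (Real.exp x - K) 0 = 0 := max_eq_right (by linarith)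
      have hconst : Tendsto (fun s : ℝ => (x - Real.log K) * s⁻¹)
          (nhdsWithin 0 (Set.Ioi 0)) atBot :=
        hIoi.const_mul_atTop_of_neg (by linarith)
      have hdp : Tendsto (fun s : ℝ => (x - Real.log K)/s + s/2)
          (nhdsWithin 0 (Set.Ioi 0)) atBot := by
        have := hconst.atBot_add hhalf
        refine this.congr fun s => by simp [div_eq_mul_inv]
      have hdm : Tendsto (fun s : ℝ => (x - Real.log K)/s - s/2)
          (nhdsWithin 0 (Set.Ioi 0)) atBot := by
        have := hconst.atBot_add hhalf.neg
        refine this.congr fun s => by simp [div_eq_mul_inv]; ring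
      have hC : Tendsto (fun s => CBS1 x K s) (nhdsWithin 0 (Set.Ioi 0))
          (nhds (Real.exp x * 0 - K * 0)) := by
        unfold CBS1
        exact ((tendsto_Phi_atBot.comp hdp).const_mul (Real.exp x)).sub
          ((tendsto_Phi_atBot.comp hdm).const_mul K)
      rw [hmax]
      have := hC.sub_const 0
      simpa using this
  have hg0 : Tendsto (fun s => K * s ^ 3 / (Real.sqrt (2 * Real.pi) * a ^ 2)
      * Real.exp (-a ^ 2 / (2 * s ^ 2) - a / 2)) (nhdsWithin 0 (Set.Ioi 0)) (nhds 0) := by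
    have hsq : Tendsto (fun s : ℝ => s ^ 2) (nhdsWithin 0 (Set.Ioi 0))
        (nhdsWithin 0 (Set.Ioi 0)) := by
      rw [tendsto_nhdsWithin_iff]
      constructor
      · have := ((continuous_pow 2).tendsto (0:ℝ)).mono_left
          (nhdsWithin_le_nhds (a := (0:ℝ)) (s := Set.Ioi 0))
        simpa using this
      · exact eventually_mem_nhdsWithin.mono fun s hs => mem_Ioi.2 (pow_pos hs 2)
    have hinv2 : Tendsto (fun s : ℝ => (s ^ 2)⁻¹) (nhdsWithin 0 (Set.Ioi 0)) atTop :=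
      tendsto_inv_nhdsGT_zero.comp hsq
    have hbot : Tendsto (fun s : ℝ => -a ^ 2 / (2 * s ^ 2) - a / 2)
        (nhdsWithin 0 (Set.Ioi 0)) atBot := by
      have h1 : Tendsto (fun s : ℝ => (-a ^ 2 / 2) * (s ^ 2)⁻¹)
          (nhdsWithin 0 (Set.Ioi 0)) atBot :=
        hinv2.const_mul_atTop_of_neg (div_neg_of_neg_of_pos (neg_lt_zero.mpr ha2) two_pos)
      have h2 := h1.atBot_add (tendsto_const_nhds (x := -(a/2)))
      refine h2.congr fun s => by ring
    have hE : Tendsto (fun s : ℝ => Real.exp (-a ^ 2 / (2 * s ^ 2) - a / 2))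
        (nhdsWithin 0 (Set.Ioi 0)) (nhds 0) := Real.tendsto_exp_atBot.comp hbot
    have hpoly : Tendsto (fun s : ℝ => K * s ^ 3 / (Real.sqrt (2 * Real.pi) * a ^ 2))
        (nhdsWithin 0 (Set.Ioi 0)) (nhds 0) := by
      have hcont : Continuous fun s : ℝ => K * s ^ 3 / (Real.sqrt (2 * Real.pi) * a ^ 2) :=
        (continuous_const.mul (continuous_pow 3)).div_const _
      have := (hcont.tendsto 0).mono_left
        (nhdsWithin_le_nhds (a := (0:ℝ)) (s := Set.Ioi 0))
      simpa using this
    have := hpoly.mul hE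
    simpa using this
  -- limit of the ratio of derivatives
  have hdiv : Tendsto (fun s => f' s / g' s) (nhdsWithin 0 (Set.Ioi 0)) (nhds 1) := by
    have heq : ∀ s ∈ Set.Ioi (0:ℝ),
        f' s / g' s = a ^ 2 * Real.exp (-s ^ 2 / 8) / (3 * s ^ 2 + a ^ 2) := by
      intro s hs
      have hs0 : s ≠ 0 := ne_of_gt hs
      have hexp : Real.exp (-((x - Real.log K)/s - s/2)^2/2)
          = Real.exp (-a^2/(2*s^2) - a/2) * Real.exp (-s^2/8) := by
        rw [← Real.exp_add]
        congr 1
        rw [ha_def]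
        field_simp
        ring
      rw [hf'_def, hg'_def, hc_def]
      simp only []
      rw [hexp]
      have h3 : (3 * s ^ 2 + a ^ 2) ≠ 0 := by positivity
      field_simp
    have hlim : Tendsto (fun s : ℝ => a ^ 2 * Real.exp (-s ^ 2 / 8) / (3 * s ^ 2 + a ^ 2))
        (nhdsWithin 0 (Set.Ioi 0)) (nhds 1) := by
      have hcont : Continuous fun s : ℝ => a ^ 2 * Real.exp (-s ^ 2 / 8) :=
        continuous_const.mul ((continuous_pow 2).neg.div_const 8).rexp
      have h1 : Tendsto (fun s : ℝ => a ^ 2 * Real.exp (-s ^ 2 / 8))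
          (nhdsWithin 0 (Set.Ioi 0)) (nhds (a ^ 2)) := by
        have := (hcont.tendsto 0).mono_left
          (nhdsWithin_le_nhds (a := (0:ℝ)) (s := Set.Ioi 0))
        simpa using this
      have h2 : Tendsto (fun s : ℝ => 3 * s ^ 2 + a ^ 2)
          (nhdsWithin 0 (Set.Ioi 0)) (nhds (a ^ 2)) := by
        have hcont2 : Continuous fun s : ℝ => 3 * s ^ 2 + a ^ 2 :=
          (continuous_const.mul (continuous_pow 2)).add continuous_const
        have := (hcont2.tendsto 0).mono_left
          (nhdsWithin_le_nhds (a := (0:ℝ)) (s := Set.Ioi 0))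
        simpa using this
      have := h1.div h2 ha2.ne'
      simpa [div_self ha2.ne', Pi.div_def] using this
    refine hlim.congr' ?_
    exact (eventually_mem_nhdsWithin.mono fun s hs => (heq s hs).symm)
  exact HasDerivAt.lhopital_zero_right_on_Ioo one_pos hff' hgg' hg'ne hf0 hg0 hdiv
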